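/- Each HGML_c classifier is captured by an HC-MPNN over valid relational hypergraphs: for every HGML_c formula φ(x) over a vocabulary of relation types R with arities, node colors C, and constant symbols b ∈ b̃, there exist L ≥ 0, an HC-MPNN with L layers whose initialization INIT(v, q) depends only on the color of v and on which (if any) constant of b̃ the node v interprets, and a designated coordinate p of the final feature vectors, such that for every valid relational hypergraph G = (V, E, R, c, (v_b)_{b∈b̃}) and every node v ∈ V, the p-th entry of h_v^(L) equals 1 if G ⊨ φ(v) and equals 0 otherwise. -/

import Mathlib

/-- A relational hypergraph over node set `V`, relation types `R` with arities `ar`.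
A hyperedge (fact) `r(u₁,…,u_k)` is a pair of a relation type `r` and the tuple of
its nodes, of length `k = ar r`. -/
structure RelHG (V R : Type) (ar : R → ℕ) where
  edges : Finset (Σ r : R, Fin (ar r) → V)

variable {V R D : Type} {ar : R → ℕ}

/-- `E(v)`: the set of edge–position pairs `(e, i)` with `e(i) = v`. -/
def RelHG.incid [DecidableEq V] (H : RelHG V R ar) (v : V) :
    Finset (Σ e : Σ r : R, Fin (ar r) → V, Fin (ar e.1)) :=
  (H.edges.sigma fun e => (Finset.univ : Finset (Fin (ar e.1)))).filter
    fun p => p.1.2 p.2 = v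

/-- Colors used by the canonical (`τ = id`) hypergraph relational 1-WL test after `ℓ`
rounds, starting from colors in `D`. -/
def WLC (D R : Type) : ℕ → Type :=
  fun ℓ => Nat.rec D (fun _ ih => ih × Multiset (Set (ih × ℕ) × R)) ℓ

/-- The hypergraph relational 1-WL test `hrwl₁`, with the canonical injective `τ`
(pairing), starting from the node coloring `c`. -/
def RelHG.hrwl [DecidableEq V] (H : RelHG V R ar) (c : V → D) :
    (ℓ : ℕ) → V → WLC D R ℓ
  | 0 => c
  | ℓ + 1 => fun v =>
      ⟨RelHG.hrwl H c ℓ v,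
        (H.incid v).val.map fun ei =>
          ({p : WLC D R ℓ × ℕ |
              ∃ j : Fin (ar ei.1.1), j ≠ ei.2 ∧
                p = (RelHG.hrwl H c ℓ (ei.1.2 j), (j : ℕ))},
            ei.1.1)⟩

/-- A hypergraph relational MPNN (HR-MPNN): layer dimensions `d`, message spaces `M`,
aggregation spaces `A`, and arbitrary relation-specific message, aggregation and
update functions for every layer. -/
structure HRMPNN (R : Type) where
  d : ℕ → ℕ
  M : ℕ → Type
  A : ℕ → Type
  msg : (ℓ : ℕ) → R → Set ((Fin (d ℓ) → ℝ) × ℕ) → M ℓ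
  agg : (ℓ : ℕ) → (Fin (d ℓ) → ℝ) → Multiset (M ℓ) → A ℓ
  up : (ℓ : ℕ) → (Fin (d ℓ) → ℝ) → A ℓ → Fin (d (ℓ + 1)) → ℝ

/-- The feature maps `h⁽ℓ⁾` computed by an HR-MPNN on a relational hypergraph `H`
from the initial feature map `x`. -/
def HRMPNN.h [DecidableEq V] (net : HRMPNN R) (H : RelHG V R ar)
    (x : V → Fin (net.d 0) → ℝ) : (ℓ : ℕ) → V → Fin (net.d ℓ) → ℝ
  | 0 => x
  | ℓ + 1 => fun v =>
      net.up ℓ (HRMPNN.h net H x ℓ v)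
        (net.agg ℓ (HRMPNN.h net H x ℓ v)
          ((H.incid v).val.map fun ei =>
            net.msg ℓ ei.1.1
              {p : (Fin (net.d ℓ) → ℝ) × ℕ |
                ∃ j : Fin (ar ei.1.1), j ≠ ei.2 ∧
                  p = (HRMPNN.h net H x ℓ (ei.1.2 j), (j : ℕ))}))

mutual
/-- Formulas of hypergraph graded modal logic with constants (HGML_c), over relation
types `R` with arities `ar`, node colors `C`, and constant symbols `B`.
`const b` is the atomic formula `x = b`; `count r i N hN Ψ` is
`∃^{≥N} ỹ (r(y₁,…,y_{i-1},x,y_{i+1},…,y_{ar r}) ∧ Ψ(ỹ))` with `N ≥ 1`. -/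
inductive HGMLc (R C B : Type) (ar : R → ℕ) : Type where
  | color : C → HGMLc R C B ar
  | const : B → HGMLc R C B ar
  | fnot : HGMLc R C B ar → HGMLc R C B ar
  | fand : HGMLc R C B ar → HGMLc R C B ar → HGMLc R C B ar
  | count : (r : R) → (i : Fin (ar r)) → (N : ℕ) → 1 ≤ N →
      BCombc R C B ar (ar r) i → HGMLc R C B ar

/-- Boolean combinations of HGML_c formulas whose free variables range over the
positions `j ≠ i` of a relation of arity `k` (the tuple `ỹ`). -/
inductive BCombc (R C B : Type) (ar : R → ℕ) : (k : ℕ) → Fin k → Type where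
  | atom : {k : ℕ} → {i : Fin k} → (j : Fin k) → j ≠ i → HGMLc R C B ar →
      BCombc R C B ar k i
  | bnot : {k : ℕ} → {i : Fin k} → BCombc R C B ar k i → BCombc R C B ar k i
  | band : {k : ℕ} → {i : Fin k} → BCombc R C B ar k i → BCombc R C B ar k i →
      BCombc R C B ar k i
end

variable {C B : Type}

mutual
/-- Satisfaction `G ⊨ φ(v)` of an HGML_c formula at a node of a relational hypergraph
`H` with node coloring `c` and interpretation `ι` of the constants.  In the counting
case we count full tuples `w : Fin (ar r) → V` with `w i = v`. -/
def HGMLc.sat (H : RelHG V R ar) (c : V → C) (ι : B → V) : HGMLc R C B ar → V → Prop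
  | .color a, v => c v = a
  | .const b, v => v = ι b
  | .fnot φ, v => ¬ HGMLc.sat H c ι φ v
  | .fand φ ψ, v => HGMLc.sat H c ι φ v ∧ HGMLc.sat H c ι ψ v
  | .count r i N _ Ψ, v =>
      ∃ s : Finset (Fin (ar r) → V),
        N ≤ s.card ∧ ∀ w ∈ s, w i = v ∧
          (⟨r, w⟩ : Σ r' : R, Fin (ar r') → V) ∈ H.edges ∧ BCombc.sat H c ι Ψ w

/-- Satisfaction of a Boolean combination under an assignment `w` of the variables. -/
def BCombc.sat (H : RelHG V R ar) (c : V → C) (ι : B → V) :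
    {k : ℕ} → {i : Fin k} → BCombc R C B ar k i → (Fin k → V) → Prop
  | _, _, .atom j _ φ, w => HGMLc.sat H c ι φ (w j)
  | _, _, .bnot Ψ, w => ¬ BCombc.sat H c ι Ψ w
  | _, _, .band Ψ₁ Ψ₂, w => BCombc.sat H c ι Ψ₁ w ∧ BCombc.sat H c ι Ψ₂ w
end

section Aux

open Classical

variable {V R C B : Type} {ar : R → ℕ}

mutual
/-- The list of subformulas of an HGML_c formula. -/
def HGMLc.subs : HGMLc R C B ar → List (HGMLc R C B ar)
  | .color a => [.color a]
  | .const b => [.const b]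
  | .fnot ψ => .fnot ψ :: ψ.subs
  | .fand ψ χ => .fand ψ χ :: (ψ.subs ++ χ.subs)
  | .count r i N h Ψ => .count r i N h Ψ :: Ψ.subsB

def BCombc.subsB : {k : ℕ} → {i : Fin k} → BCombc R C B ar k i → List (HGMLc R C B ar)
  | _, _, .atom _ _ χ => χ.subs
  | _, _, .bnot Ψ => Ψ.subsB
  | _, _, .band Ψ₁ Ψ₂ => Ψ₁.subsB ++ Ψ₂.subsB
end

mutual
/-- Modal depth. -/
def HGMLc.depth : HGMLc R C B ar → ℕ
  | .color _ => 0
  | .const _ => 0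
  | .fnot ψ => ψ.depth
  | .fand ψ χ => max ψ.depth χ.depth
  | .count _ _ _ _ Ψ => Ψ.depthB + 1

def BCombc.depthB : {k : ℕ} → {i : Fin k} → BCombc R C B ar k i → ℕ
  | _, _, .atom _ _ χ => χ.depth
  | _, _, .bnot Ψ => Ψ.depthB
  | _, _, .band Ψ₁ Ψ₂ => max Ψ₁.depthB Ψ₂.depthB
end

mutual
/-- Size, used as termination measure. -/
def HGMLc.sz : HGMLc R C B ar → ℕ
  | .color _ => 1
  | .const _ => 1
  | .fnot ψ => ψ.sz + 1
  | .fand ψ χ => ψ.sz + χ.sz + 1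
  | .count _ _ _ _ Ψ => Ψ.szB + 1

def BCombc.szB : {k : ℕ} → {i : Fin k} → BCombc R C B ar k i → ℕ
  | _, _, .atom _ _ χ => χ.sz + 1
  | _, _, .bnot Ψ => Ψ.szB + 1
  | _, _, .band Ψ₁ Ψ₂ => Ψ₁.szB + Ψ₂.szB + 1
end

theorem HGMLc.subs_head (φ : HGMLc R C B ar) : ∃ l, φ.subs = φ :: l := by
  cases φ <;> exact ⟨_, rfl⟩

theorem HGMLc.mem_subs_self (φ : HGMLc R C B ar) : φ ∈ φ.subs := by
  obtain ⟨l, hl⟩ := φ.subs_head; rw [hl]; exact List.mem_cons_self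

theorem HGMLc.subs_length_pos (φ : HGMLc R C B ar) : 0 < φ.subs.length := by
  obtain ⟨l, hl⟩ := φ.subs_head; simp [hl]

mutual
theorem HGMLc.subs_closed : ∀ {φ χ : HGMLc R C B ar}, χ ∈ φ.subs → χ.subs ⊆ φ.subs
  | .color a, χ, h => by
      simp only [HGMLc.subs, List.mem_singleton] at h; subst h; exact fun _ h => h
  | .const b, χ, h => by
      simp only [HGMLc.subs, List.mem_singleton] at h; subst h; exact fun _ h => h
  | .fnot ψ, χ, h => by
      rcases List.mem_cons.mp h with h | h
      · subst h; exact fun _ h => h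
      · exact List.Subset.trans (HGMLc.subs_closed h) (List.subset_cons_self _ _)
  | .fand ψ₁ ψ₂, χ, h => by
      rcases List.mem_cons.mp h with h | h
      · subst h; exact fun _ h => h
      · rcases List.mem_append.mp h with h | h
        · exact List.Subset.trans (HGMLc.subs_closed h)
            (List.Subset.trans (List.subset_append_left _ _) (List.subset_cons_self _ _))
        · exact List.Subset.trans (HGMLc.subs_closed h)
            (List.Subset.trans (List.subset_append_right _ _) (List.subset_cons_self _ _))
  | .count r i N hN Ψ, χ, h => by
      rcases List.mem_cons.mp h with h | h
      · subst h; exact fun _ h => h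
      · exact List.Subset.trans (BCombc.subsB_closed h) (List.subset_cons_self _ _)
termination_by φ _ _ => φ.sz
decreasing_by all_goals (simp [HGMLc.sz, BCombc.szB]) <;> omega

theorem BCombc.subsB_closed : ∀ {k : ℕ} {i : Fin k} {Ψ : BCombc R C B ar k i}
    {χ : HGMLc R C B ar}, χ ∈ Ψ.subsB → χ.subs ⊆ Ψ.subsB
  | _, _, .atom _ _ χ', χ, h => HGMLc.subs_closed (φ := χ') h
  | _, _, .bnot Ψ, χ, h => BCombc.subsB_closed (Ψ := Ψ) h
  | _, _, .band Ψ₁ Ψ₂, χ, h => by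
      rcases List.mem_append.mp h with h | h
      · exact List.Subset.trans (BCombc.subsB_closed h) (List.subset_append_left _ _)
      · exact List.Subset.trans (BCombc.subsB_closed h) (List.subset_append_right _ _)
termination_by k i Ψ _ _ => Ψ.szB
decreasing_by all_goals (simp [HGMLc.sz, BCombc.szB]) <;> omega
end

end Aux
section Aux2

open Classical

variable {V R C B : Type} {ar : R → ℕ}

/-- Quantifier-free satisfaction, depending only on the color and the constant tag. -/
def HGMLc.sat0 (a : C) (ob : Option B) : HGMLc R C B ar → Prop
  | .color a' => a = a'
  | .const b => ob = some b
  | .fnot ψ => ¬ ψ.sat0 a ob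
  | .fand ψ χ => ψ.sat0 a ob ∧ χ.sat0 a ob
  | .count _ _ _ _ _ => False

/-- The coordinate of a subformula. -/
noncomputable def pick (φ ψ : HGMLc R C B ar) : Fin φ.subs.length :=
  if h : ψ ∈ φ.subs then ⟨φ.subs.idxOf ψ, List.idxOf_lt_length_iff.mpr h⟩
  else ⟨0, φ.subs_length_pos⟩

theorem pick_get {φ ψ : HGMLc R C B ar} (h : ψ ∈ φ.subs) :
    φ.subs.get (pick φ ψ) = ψ := by
  simp only [pick, dif_pos h]
  exact List.idxOf_get _

mutual
/-- Evaluate a formula from the previous feature vector `x` and messages `m`. -/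
noncomputable def evalH (φ : HGMLc R C B ar) (x : Fin φ.subs.length → ℝ)
    (m : Multiset (Set ((Fin φ.subs.length → ℝ) × ℕ) × R)) : HGMLc R C B ar → ℝ
  | .color a => x (pick φ (.color a))
  | .const b => x (pick φ (.const b))
  | .fnot ψ => if evalH φ x m ψ = 1 then 0 else 1
  | .fand ψ χ => if evalH φ x m ψ = 1 ∧ evalH φ x m χ = 1 then 1 else 0
  | .count r i N _ Ψ =>
      if N ≤ Multiset.card (m.filter fun sr => sr.2 = r ∧
          (∀ y : Fin φ.subs.length → ℝ, (y, (i : ℕ)) ∉ sr.1) ∧ evalB φ Ψ sr.1)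
      then 1 else 0

noncomputable def evalB (φ : HGMLc R C B ar) : {k : ℕ} → {i : Fin k} →
    BCombc R C B ar k i → Set ((Fin φ.subs.length → ℝ) × ℕ) → Prop
  | _, _, .atom j _ χ, S => ∃ y, (y, (j : ℕ)) ∈ S ∧ y (pick φ χ) = 1
  | _, _, .bnot Ψ, S => ¬ evalB φ Ψ S
  | _, _, .band Ψ₁ Ψ₂, S => evalB φ Ψ₁ S ∧ evalB φ Ψ₂ S
end

/-- The target feature map. -/
noncomputable def tgt (φ : HGMLc R C B ar) (H : RelHG V R ar) (c : V → C) (ι : B → V)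
    (ℓ : ℕ) (v : V) : Fin φ.subs.length → ℝ :=
  fun p => if (φ.subs.get p).depth ≤ ℓ ∧ HGMLc.sat H c ι (φ.subs.get p) v then 1 else 0

/-- The messages received at `v` at layer `ℓ`, assuming features are `tgt`. -/
noncomputable def msgs [DecidableEq V] (φ : HGMLc R C B ar) (H : RelHG V R ar)
    (c : V → C) (ι : B → V) (ℓ : ℕ) (v : V) :
    Multiset (Set ((Fin φ.subs.length → ℝ) × ℕ) × R) :=
  (H.incid v).val.map fun ei =>
    ({p : (Fin φ.subs.length → ℝ) × ℕ |
        ∃ j : Fin (ar ei.1.1), j ≠ ei.2 ∧ p = (tgt φ H c ι ℓ (ei.1.2 j), (j : ℕ))},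
      ei.1.1)

/-- The network capturing `φ`. -/
noncomputable def theNet (φ : HGMLc R C B ar) : HRMPNN R where
  d := fun _ => φ.subs.length
  M := fun _ => Set ((Fin φ.subs.length → ℝ) × ℕ) × R
  A := fun _ => Multiset (Set ((Fin φ.subs.length → ℝ) × ℕ) × R)
  msg := fun _ r S => (S, r)
  agg := fun _ _ ms => ms
  up := fun ℓ x a p =>
    if (φ.subs.get p).depth ≤ ℓ + 1 then evalH φ x a (φ.subs.get p) else 0

/-- The initialization. -/
noncomputable def f0 (φ : HGMLc R C B ar) (a : C) (ob : Option B) :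
    Fin φ.subs.length → ℝ :=
  fun p => if (φ.subs.get p).depth = 0 ∧ (φ.subs.get p).sat0 a ob then 1 else 0

end Aux2
section Aux3

open Classical

variable {V R C B : Type} {ar : R → ℕ}

theorem sat0_correct {H : RelHG V R ar} {c : V → C} {ι : B → V} {o : V → Option B}
    (ho : ∀ (v : V) (b : B), o v = some b ↔ ι b = v) :
    ∀ (ψ : HGMLc R C B ar), ψ.depth = 0 → ∀ v : V,
      (HGMLc.sat0 (c v) (o v) ψ ↔ HGMLc.sat H c ι ψ v)
  | .color a, _, v => by simp [HGMLc.sat0, HGMLc.sat]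
  | .const b, _, v => by
      simp only [HGMLc.sat0, HGMLc.sat]
      exact (ho v b).trans eq_comm
  | .fnot ψ, h, v => by
      simp only [HGMLc.depth] at h
      simp only [HGMLc.sat0, HGMLc.sat]
      exact not_congr (sat0_correct ho ψ h v)
  | .fand ψ χ, h, v => by
      simp only [HGMLc.depth, Nat.max_eq_zero_iff] at h
      simp only [HGMLc.sat0, HGMLc.sat]
      exact and_congr (sat0_correct ho ψ h.1 v) (sat0_correct ho χ h.2 v)
  | .count r i N hN Ψ, h, v => by simp [HGMLc.depth] at h

theorem mem_incid [DecidableEq V] {H : RelHG V R ar} {v : V}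
    {z : Σ e : Σ r : R, Fin (ar r) → V, Fin (ar e.1)} :
    z ∈ H.incid v ↔ z.1 ∈ H.edges ∧ z.1.2 z.2 = v := by
  simp [RelHG.incid]

theorem sat_count_iff [Fintype V] {H : RelHG V R ar} {c : V → C} {ι : B → V}
    {r : R} {i : Fin (ar r)} {N : ℕ} {hN : 1 ≤ N} {Ψ : BCombc R C B ar (ar r) i}
    {v : V} :
    HGMLc.sat H c ι (.count r i N hN Ψ) v ↔
      N ≤ (Finset.univ.filter fun w : Fin (ar r) → V =>
        w i = v ∧ (⟨r, w⟩ : Σ r', Fin (ar r') → V) ∈ H.edges ∧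
          BCombc.sat H c ι Ψ w).card := by
  simp only [HGMLc.sat]
  constructor
  · rintro ⟨s, hs, hall⟩
    refine hs.trans (Finset.card_le_card ?_)
    intro w hw
    simp only [Finset.mem_filter, Finset.mem_univ, true_and]
    exact hall w hw
  · intro hcard
    refine ⟨_, hcard, ?_⟩
    intro w hw
    simpa using hw
section Aux4

open Classical

variable {V R C B : Type} {ar : R → ℕ}

mutual
theorem evalH_correct [Fintype V] [DecidableEq V] (φ : HGMLc R C B ar)
    (H : RelHG V R ar) (c : V → C) (ι : B → V) (ℓ : ℕ) (v : V) :
    ∀ ψ : HGMLc R C B ar, ψ ∈ φ.subs → ψ.depth ≤ ℓ + 1 →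
      evalH φ (tgt φ H c ι ℓ v) (msgs φ H c ι ℓ v) ψ =
        if HGMLc.sat H c ι ψ v then 1 else 0
  | .color a, hm, _ => by
      simp only [evalH, tgt, pick_get hm, HGMLc.depth]
      simp
  | .const b, hm, _ => by
      simp only [evalH, tgt, pick_get hm, HGMLc.depth]
      simp
  | .fnot ψ, hm, hd => by
      have hψ : ψ ∈ φ.subs :=
        HGMLc.subs_closed hm (List.mem_cons_of_mem _ ψ.mem_subs_self)
      have hdψ : ψ.depth ≤ ℓ + 1 := by simpa [HGMLc.depth] using hd
      simp only [evalH, evalH_correct φ H c ι ℓ v ψ hψ hdψ, HGMLc.sat]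
      by_cases hs : HGMLc.sat H c ι ψ v <;> simp [hs]
  | .fand ψ χ, hm, hd => by
      have hψ : ψ ∈ φ.subs := HGMLc.subs_closed hm
        (List.mem_cons_of_mem _ (List.mem_append_left _ ψ.mem_subs_self))
      have hχ : χ ∈ φ.subs := HGMLc.subs_closed hm
        (List.mem_cons_of_mem _ (List.mem_append_right _ χ.mem_subs_self))
      simp only [HGMLc.depth, max_le_iff] at hd
      simp only [evalH, evalH_correct φ H c ι ℓ v ψ hψ hd.1,
        evalH_correct φ H c ι ℓ v χ hχ hd.2, HGMLc.sat]
      by_cases hs : HGMLc.sat H c ι ψ v <;>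
        by_cases hs' : HGMLc.sat H c ι χ v <;> simp [hs, hs']
  | .count r i N hN Ψ, hm, hd => by
      have hΨsub : Ψ.subsB ⊆ φ.subs :=
        fun χ hχ => HGMLc.subs_closed hm (List.mem_cons_of_mem _ hχ)
      have hdΨ : Ψ.depthB ≤ ℓ := by
        simp only [HGMLc.depth] at hd; omega
      rw [sat_count_iff]
      simp only [evalH]
      congr 1
      rw [msgs, Multiset.filter_map, Multiset.card_map]
      have hset : ∀ ei : Σ e : Σ r' : R, Fin (ar r') → V, Fin (ar e.1),
          ei ∈ H.incid v →
          ((fun sr : Set ((Fin φ.subs.length → ℝ) × ℕ) × R => sr.2 = r ∧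
            (∀ y : Fin φ.subs.length → ℝ, (y, (i : ℕ)) ∉ sr.1) ∧ evalB φ Ψ sr.1)
            ({p : (Fin φ.subs.length → ℝ) × ℕ |
              ∃ j : Fin (ar ei.1.1), j ≠ ei.2 ∧
                p = (tgt φ H c ι ℓ (ei.1.2 j), (j : ℕ))}, ei.1.1) ↔
          ∃ w : Fin (ar r) → V, (w i = v ∧
            (⟨r, w⟩ : Σ r', Fin (ar r') → V) ∈ H.edges ∧ BCombc.sat H c ι Ψ w)
            ∧ (⟨⟨r, w⟩, i⟩ : Σ e : Σ r' : R, Fin (ar r') → V, Fin (ar e.1)) = ei) := by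
        rintro ⟨⟨r', w'⟩, i'⟩ hmem
        obtain ⟨hedge, hv⟩ := mem_incid.mp hmem
        constructor
        · rintro ⟨hr, hpos, hB⟩
          dsimp only at hr
          subst hr
          have hii : i' = i := by
            by_contra hne
            exact hpos (tgt φ H c ι ℓ (w' i))
              ⟨i, fun h => hne h.symm, rfl⟩
          subst hii
          refine ⟨w', ⟨hv, hedge, ?_⟩, rfl⟩
          exact (evalB_correct φ H c ι ℓ Ψ hΨsub hdΨ w').mp hB
        · rintro ⟨w, ⟨hwv, hwe, hws⟩, hz⟩
          obtain ⟨h1, h2⟩ := Sigma.mk.inj_iff.mp hz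
          obtain ⟨hr, hw⟩ := Sigma.mk.inj_iff.mp h1
          subst hr
          have hw' : w = w' := eq_of_heq hw
          subst hw'
          have hi' : i = i' := eq_of_heq h2
          subst hi'
          refine ⟨rfl, ?_, ?_⟩
          · rintro y ⟨j, hji, hjp⟩
            have : (j : ℕ) = (i : ℕ) := (Prod.mk_inj.mp hjp.symm).2
            exact hji (Fin.ext this)
          · exact (evalB_correct φ H c ι ℓ Ψ hΨsub hdΨ w).mpr hws
      rw [← Finset.filter_val, ← Finset.card_def]
      simp only [Function.comp_def]
      rw [Finset.filter_congr (fun ei hei => hset ei hei)]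
      congr 1
      symm
      apply Finset.card_bij (fun (w : Fin (ar r) → V) _ =>
        (⟨⟨r, w⟩, i⟩ : Σ e : Σ r' : R, Fin (ar r') → V, Fin (ar e.1)))
      · intro w hw
        simp only [Finset.mem_filter, Finset.mem_univ, true_and] at hw
        simp only [Finset.mem_filter]
        exact ⟨mem_incid.mpr ⟨hw.2.1, hw.1⟩, w, hw, rfl⟩
      · intro w₁ _ w₂ _ heq
        obtain ⟨h1, -⟩ := Sigma.mk.inj_iff.mp heq
        obtain ⟨-, hw⟩ := Sigma.mk.inj_iff.mp h1
        exact eq_of_heq hw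
      · intro ei hei
        simp only [Finset.mem_filter] at hei
        obtain ⟨-, w, hQ, hemb⟩ := hei
        exact ⟨w, by simpa using hQ, hemb⟩

theorem evalB_correct [Fintype V] [DecidableEq V] (φ : HGMLc R C B ar)
    (H : RelHG V R ar) (c : V → C) (ι : B → V) (ℓ : ℕ) :
    ∀ {k : ℕ} {i : Fin k} (Ψ : BCombc R C B ar k i), Ψ.subsB ⊆ φ.subs →
      Ψ.depthB ≤ ℓ → ∀ w : Fin k → V,
      (evalB φ Ψ {p : (Fin φ.subs.length → ℝ) × ℕ |
          ∃ j, j ≠ i ∧ p = (tgt φ H c ι ℓ (w j), (j : ℕ))} ↔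
        BCombc.sat H c ι Ψ w)
  | k, i, .atom j hji χ, hsub, hdep, w => by
      have hχ : χ ∈ φ.subs := hsub χ.mem_subs_self
      have hdχ : χ.depth ≤ ℓ := by simpa [BCombc.depthB] using hdep
      simp only [evalB, BCombc.sat]
      constructor
      · rintro ⟨y, ⟨j', hj'i, hy⟩, h1⟩
        obtain ⟨hy1, hy2⟩ := Prod.mk_inj.mp hy
        have hjj : j' = j := Fin.ext hy2.symm
        subst hjj
        subst hy1
        rw [tgt, pick_get hχ] at h1
        by_cases hs : χ.depth ≤ ℓ ∧ HGMLc.sat H c ι χ (w j')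
        · exact hs.2
        · simp [if_neg hs] at h1
      · intro hs
        refine ⟨tgt φ H c ι ℓ (w j), ⟨j, hji, rfl⟩, ?_⟩
        rw [tgt, pick_get hχ, if_pos ⟨hdχ, hs⟩]
  | k, i, .bnot Ψ, hsub, hdep, w => by
      simp only [evalB, BCombc.sat]
      exact not_congr (evalB_correct φ H c ι ℓ Ψ hsub (by simpa [BCombc.depthB] using hdep) w)
  | k, i, .band Ψ₁ Ψ₂, hsub, hdep, w => by
      simp only [BCombc.depthB, max_le_iff] at hdep
      simp only [evalB, BCombc.sat]
      exact and_congr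
        (evalB_correct φ H c ι ℓ Ψ₁
          (fun χ hχ => hsub (List.mem_append_left _ hχ)) hdep.1 w)
        (evalB_correct φ H c ι ℓ Ψ₂
          (fun χ hχ => hsub (List.mem_append_right _ hχ)) hdep.2 w)
end

end Aux4
section Aux5

open Classical

variable {V R C B : Type} {ar : R → ℕ}

theorem h_eq_tgt [Fintype V] [DecidableEq V] (φ : HGMLc R C B ar)
    (H : RelHG V R ar) (c : V → C) (ι : B → V) (o : V → Option B)
    (ho : ∀ (v : V) (b : B), o v = some b ↔ ι b = v) :
    ∀ ℓ : ℕ, (theNet φ).h H (fun u => f0 φ (c u) (o u)) ℓ =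
      fun v => tgt φ H c ι ℓ v
  | 0 => by
      funext v p
      simp only [HRMPNN.h, f0, tgt, Nat.le_zero]
      by_cases hd : (φ.subs.get p).depth = 0
      · have hs := sat0_correct (H := H) (c := c) ho (φ.subs.get p) hd v
        simp only [hd, hs, true_and]
      · simp only [hd, false_and, if_false]
  | ℓ + 1 => by
      have IH := h_eq_tgt φ H c ι o ho ℓ
      funext v p
      simp only [HRMPNN.h, IH]
      show (if (φ.subs.get p).depth ≤ ℓ + 1 then
          evalH φ (tgt φ H c ι ℓ v) (msgs φ H c ι ℓ v) (φ.subs.get p) else 0) = _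
      by_cases hd : (φ.subs.get p).depth ≤ ℓ + 1
      · rw [if_pos hd,
          evalH_correct φ H c ι ℓ v (φ.subs.get p) (φ.subs.get_mem _) hd]
        simp only [tgt, hd, true_and]
      · rw [if_neg hd]
        simp only [tgt, hd, false_and, if_false]

end Aux5
/-- Each HGML_c classifier is captured by an HC-MPNN over valid
relational hypergraphs: for every HGML_c formula `φ(x)` there are `L ≥ 0`, an HC-MPNN
with `L` layers whose initialization depends only on the color of a node and on which
(if any) constant the node interprets (its message, aggregation and update functions
do not depend on the query, so it is given by HR-MPNN layers together with the
initialization `f`), and a coordinate `p` of the final feature vectors, such that on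
every valid relational hypergraph (i.e. one whose constant interpretation `ι` is
injective) the `p`-th entry of `h_v⁽ᴸ⁾` is `1` if `G ⊨ φ(v)` and `0` otherwise.
Here `o : V → Option B` records which (if any) constant each node interprets. -/
theorem hgmlc_captured_by_HCMPNN
    {R C B : Type} [Fintype R] [DecidableEq R] [Fintype C] [DecidableEq C]
    {ar : R → ℕ} (har : ∀ r : R, 1 ≤ ar r) (φ : HGMLc R C B ar) :
    ∃ (L : ℕ) (net : HRMPNN R) (f : C → Option B → Fin (net.d 0) → ℝ)
      (p : Fin (net.d L)),
      ∀ (V : Type) [Fintype V] [DecidableEq V]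
        (H : RelHG V R ar) (c : V → C) (ι : B → V),
        Function.Injective ι →
        ∀ o : V → Option B, (∀ (v : V) (b : B), o v = some b ↔ ι b = v) →
        ∀ v : V,
          (HGMLc.sat H c ι φ v → net.h H (fun u => f (c u) (o u)) L v p = 1) ∧
          (¬ HGMLc.sat H c ι φ v → net.h H (fun u => f (c u) (o u)) L v p = 0) := by
  classical
  refine ⟨φ.depth, theNet φ, f0 φ, ⟨0, φ.subs_length_pos⟩, ?_⟩
  intro V _ _ H c ι _ o ho v
  have hh := h_eq_tgt φ H c ι o ho φ.depth
  have hget : φ.subs.get ⟨0, φ.subs_length_pos⟩ = φ := by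
    obtain ⟨l, hl⟩ := φ.subs_head
    simp [hl, List.get]
  rw [List.get_eq_getElem] at hget
  constructor
  · intro hs
    rw [show (theNet φ).h H (fun u => f0 φ (c u) (o u)) φ.depth v = tgt φ H c ι φ.depth v
      from congrFun hh v]
    simp only [tgt]
    change (if (φ.subs.get ⟨0, φ.subs_length_pos⟩).depth ≤ φ.depth ∧
      HGMLc.sat H c ι (φ.subs.get ⟨0, φ.subs_length_pos⟩) v then (1:ℝ) else 0) = _
    rw [List.get_eq_getElem, hget]; simp [hs]
  · intro hs
    rw [show (theNet φ).h H (fun u => f0 φ (c u) (o u)) φ.depth v = tgt φ H c ι φ.depth v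
      from congrFun hh v]
    simp only [tgt]
    change (if (φ.subs.get ⟨0, φ.subs_length_pos⟩).depth ≤ φ.depth ∧
      HGMLc.sat H c ι (φ.subs.get ⟨0, φ.subs_length_pos⟩) v then (1:ℝ) else 0) = _
    rw [List.get_eq_getElem, hget]; simp [hs]
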